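/- arXiv:1006.0780 — 2 statements merged into one kernel-verified Lean document; each statement's English description precedes it below -/
import Mathlib

section
/- Let Γ be an abstract simplicial complex on a finite vertex set V and let σ ⊆ V be any subset (not necessarily a face of Γ). Then the subspace ‖Γ_{≤σ̂}‖ is a deformation retract of ‖Γ‖ ∖ ‖Γ_{≤σ}‖, where ‖Γ_{≤σ}‖ and ‖Γ_{≤σ̂}‖ are viewed as subspaces of the geometric realization ‖Γ‖. -/
open Finset

/-- An abstract simplicial complex on a vertex type `V`: a collection of finite subsets of `V`
(called faces) closed under taking subsets. -/
structure ASC (V : Type) where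
  faces : Set (Finset V)
  down_closed : ∀ ⦃σ τ : Finset V⦄, σ ∈ faces → τ ⊆ σ → τ ∈ faces

namespace ASC

variable {V : Type}

/-- `Γ.restrict σ` is the subcomplex `Γ_{≤σ}` of all faces of `Γ` contained in `σ`. -/
def restrict (Γ : ASC V) (σ : Finset V) : ASC V where
  faces := {τ | τ ∈ Γ.faces ∧ τ ⊆ σ}
  down_closed := by
    intro τ τ' h hsub
    exact ⟨Γ.down_closed h.1 hsub, hsub.trans h.2⟩

/-- The link of `σ` in `Γ`: all faces `τ` with `τ ∪ σ ∈ Γ` and `τ ∩ σ = ∅`. -/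
def link [DecidableEq V] (Γ : ASC V) (σ : Finset V) : ASC V where
  faces := {τ | τ ∪ σ ∈ Γ.faces ∧ τ ∩ σ = ∅}
  down_closed := by
    intro τ τ' h hsub
    refine ⟨Γ.down_closed h.1 (Finset.union_subset_union hsub (Finset.Subset.refl σ)), ?_⟩
    rw [← Finset.subset_empty, ← h.2]
    exact Finset.inter_subset_inter hsub (Finset.Subset.refl σ)

/-- The Alexander dual `Γ* = {σ ⊆ V ∣ V∖σ ∉ Γ}`. -/
def dual [DecidableEq V] [Fintype V] (Γ : ASC V) : ASC V where
  faces := {σ | σᶜ ∉ Γ.faces}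
  down_closed := by
    intro σ τ hσ hsub hmem
    exact hσ (Γ.down_closed hmem (Finset.compl_subset_compl.mpr hsub))

/-- A maximal face (facet) of `Γ`. -/
def IsMaximalFace (Γ : ASC V) (τ : Finset V) : Prop :=
  τ ∈ Γ.faces ∧ ∀ τ' ∈ Γ.faces, τ ⊆ τ' → τ' = τ

/-- A minimal non-face of `Γ`: not a face of `Γ`, but all of its proper subsets are faces. -/
def IsMinimalNonFace (Γ : ASC V) (J : Finset V) : Prop :=
  J ∉ Γ.faces ∧ ∀ J' ⊂ J, J' ∈ Γ.faces

/-- `I` belongs to `U_SR`: it is a union of (a nonempty finite family of)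
minimal non-faces of `Γ`. -/
def memUSR [DecidableEq V] (Γ : ASC V) (I : Finset V) : Prop :=
  ∃ S : Finset (Finset V), S.Nonempty ∧ (∀ J ∈ S, Γ.IsMinimalNonFace J) ∧ I = S.sup id

section Homology

variable (K : Type) [Field K] [LinearOrder V]

/-- The `j`-dimensional faces of `Γ` (faces of cardinality `j + 1`). -/
def Cells (Γ : ASC V) (j : ℤ) : Type :=
  {σ : Finset V // σ ∈ Γ.faces ∧ (σ.card : ℤ) = j + 1}

/-- The space of simplicial `j`-chains with coefficients in `K`, i.e. the free `K`-module on the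
`j`-dimensional faces.  (This is the augmented/reduced chain complex: the empty face, if present,
spans the chains in degree `-1`.) -/
def Chains (Γ : ASC V) (j : ℤ) : Type := Cells Γ j →₀ K

noncomputable instance (Γ : ASC V) (j : ℤ) : AddCommGroup (Chains K Γ j) :=
  inferInstanceAs (AddCommGroup (Cells Γ j →₀ K))

noncomputable instance (Γ : ASC V) (j : ℤ) : Module K (Chains K Γ j) :=
  inferInstanceAs (Module K (Cells Γ j →₀ K))

/-- The simplicial boundary map from `j`-chains to `k = (j-1)`-chains, with the usual
alternating signs determined by the linear order on the vertices. -/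
noncomputable def boundary (Γ : ASC V) (j k : ℤ) (hk : k = j - 1) :
    Chains K Γ j →ₗ[K] Chains K Γ k :=
  Finsupp.lsum K fun σ : Cells Γ j =>
    LinearMap.toSpanSingleton K (Chains K Γ k)
      (∑ v ∈ σ.1.attach,
        (Finsupp.single
          (⟨σ.1.erase v.1,
            Γ.down_closed σ.2.1 (Finset.erase_subset _ _), by
              have h1 := Finset.card_erase_of_mem v.2
              have h2 : 1 ≤ σ.1.card := Finset.card_pos.mpr ⟨v.1, v.2⟩
              have h3 := σ.2.2
              omega⟩ : Cells Γ k)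
          ((-1 : K) ^ (σ.1.filter (fun w => w < v.1)).card) : Cells Γ k →₀ K))

/-- Reduced simplicial homology of `Γ` in degree `j` with coefficients in `K`:
cycles modulo (cycles that are boundaries). -/
noncomputable abbrev reducedHomology (Γ : ASC V) (j : ℤ) : Type :=
  ↥(LinearMap.ker (boundary K Γ j (j - 1) rfl)) ⧸
    Submodule.comap (LinearMap.ker (boundary K Γ j (j - 1) rfl)).subtype
      (LinearMap.range (boundary K Γ (j + 1) j (by omega)))

/-- Simplicial `j`-cochains: the `K`-linear dual of the space of `j`-chains. -/
def Cochains (Γ : ASC V) (j : ℤ) : Type := Chains K Γ j →ₗ[K] K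

noncomputable instance (Γ : ASC V) (j : ℤ) : AddCommGroup (Cochains K Γ j) :=
  inferInstanceAs (AddCommGroup (Chains K Γ j →ₗ[K] K))

noncomputable instance (Γ : ASC V) (j : ℤ) : Module K (Cochains K Γ j) :=
  inferInstanceAs (Module K (Chains K Γ j →ₗ[K] K))

/-- The simplicial coboundary map, the dual of the boundary map. -/
noncomputable def coboundary (Γ : ASC V) (j k : ℤ) (hk : k = j + 1) :
    Cochains K Γ j →ₗ[K] Cochains K Γ k :=
  (boundary K Γ k j (by omega)).dualMap

/-- Reduced simplicial cohomology of `Γ` in degree `j` with coefficients in `K`: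
cocycles modulo (cocycles that are coboundaries). -/
noncomputable abbrev reducedCohomology (Γ : ASC V) (j : ℤ) : Type :=
  ↥(LinearMap.ker (coboundary K Γ j (j + 1) rfl)) ⧸
    Submodule.comap (LinearMap.ker (coboundary K Γ j (j + 1) rfl)).subtype
      (LinearMap.range (coboundary K Γ (j - 1) j (by omega)))

end Homology

/-- The geometric realization `‖Γ‖` of `Γ`, as the subset of `V → ℝ` consisting of the
convex-weight functions whose support is a face of `Γ`. -/
def realization [Fintype V] (Γ : ASC V) : Set (V → ℝ) :=
  {x | (∀ v, 0 ≤ x v) ∧ (∑ v, x v) = 1 ∧ ∃ τ ∈ Γ.faces, ∀ v, x v ≠ 0 ↔ v ∈ τ}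

end ASC

/-- `A` is a deformation retract of `X` (as subspaces of an ambient space `α`): the identity of
`X` is homotopic to a retraction of `X` onto `A`. -/
def IsDeformationRetract {α : Type} [TopologicalSpace α] (A X : Set α) : Prop :=
  A ⊆ X ∧ ∃ H : C(↥X × ↥unitInterval, ↥X),
    (∀ x, H (x, 0) = x) ∧ (∀ x, (H (x, 1) : α) ∈ A) ∧
      (∀ x : ↥X, (x : α) ∈ A → H (x, 1) = x)

namespace DefRetractAux

open Finset

variable {V : Type} [Fintype V] [DecidableEq V]

/-- The support of a weight function, as a finset. -/
noncomputable def supp (x : V → ℝ) : Finset V := Finset.univ.filter (fun v => x v ≠ 0)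

lemma mem_supp (x : V → ℝ) (v : V) : v ∈ supp x ↔ x v ≠ 0 := by simp [supp]

lemma mem_realization_iff (Γ : ASC V) (x : V → ℝ) :
    x ∈ Γ.realization ↔ (∀ v, 0 ≤ x v) ∧ (∑ v, x v) = 1 ∧ supp x ∈ Γ.faces := by
  constructor
  · rintro ⟨h1, h2, τ, hτ, hτ'⟩
    refine ⟨h1, h2, ?_⟩
    have : supp x = τ := by ext v; simp [mem_supp, hτ' v]
    rwa [this]
  · rintro ⟨h1, h2, h3⟩
    exact ⟨h1, h2, supp x, h3, fun v => (mem_supp x v).symm⟩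

lemma mem_X_iff (Γ : ASC V) (σ : Finset V) (x : V → ℝ) :
    x ∈ Γ.realization \ (Γ.restrict σ).realization ↔
      (∀ v, 0 ≤ x v) ∧ (∑ v, x v) = 1 ∧ supp x ∈ Γ.faces ∧ ¬ supp x ⊆ σ := by
  simp only [Set.mem_diff, mem_realization_iff, ASC.restrict, Set.mem_setOf_eq]
  tauto

lemma s_pos {σ : Finset V} {x : V → ℝ} (h0 : ∀ v, 0 ≤ x v) (h : ¬ supp x ⊆ σ) :
    0 < ∑ w ∈ σᶜ, x w := by
  obtain ⟨v, hv, hvσ⟩ := Finset.not_subset.mp h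
  refine Finset.sum_pos' (fun w _ => h0 w) ⟨v, Finset.mem_compl.mpr hvσ, ?_⟩
  exact lt_of_le_of_ne (h0 v) (Ne.symm ((mem_supp x v).mp hv))

/-- The homotopy: interpolate between `x` and its renormalized restriction to `σᶜ`. -/
noncomputable def defH (σ : Finset V) (x : V → ℝ) (t : ℝ) : V → ℝ :=
  fun v => (1 - t) * x v + t * (if v ∈ σ then 0 else x v / ∑ w ∈ σᶜ, x w)

lemma defH_zero (σ : Finset V) (x : V → ℝ) : defH σ x 0 = x := by
  funext v; simp [defH]

lemma defH_nonneg {σ : Finset V} {x : V → ℝ} {t : ℝ} (h0 : ∀ v, 0 ≤ x v)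
    (hs : 0 < ∑ w ∈ σᶜ, x w) (ht0 : 0 ≤ t) (ht1 : t ≤ 1) (v : V) :
    0 ≤ defH σ x t v := by
  unfold defH
  have : 0 ≤ (if v ∈ σ then 0 else x v / ∑ w ∈ σᶜ, x w) := by
    split
    · exact le_refl 0
    · exact div_nonneg (h0 v) hs.le
  exact add_nonneg (mul_nonneg (by linarith) (h0 v)) (mul_nonneg ht0 this)

lemma defH_sum {σ : Finset V} {x : V → ℝ} {t : ℝ}
    (hsum : ∑ v, x v = 1) (hs : 0 < ∑ w ∈ σᶜ, x w) :
    ∑ v, defH σ x t v = 1 := by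
  unfold defH
  rw [Finset.sum_add_distrib, ← Finset.mul_sum, ← Finset.mul_sum, hsum]
  have h1 : ∑ v, (if v ∈ σ then (0:ℝ) else x v / ∑ w ∈ σᶜ, x w)
      = ∑ v ∈ σᶜ, x v / ∑ w ∈ σᶜ, x w := by
    rw [← Finset.sum_add_sum_compl σ]
    rw [Finset.sum_congr rfl (fun v hv => if_pos hv), Finset.sum_const_zero, zero_add]
    exact Finset.sum_congr rfl (fun v hv => if_neg (Finset.mem_compl.mp hv))
  rw [h1, ← Finset.sum_div, div_self hs.ne']
  ring

lemma defH_support_subset {σ : Finset V} {x : V → ℝ} (t : ℝ) :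
    supp (defH σ x t) ⊆ supp x := by
  intro v hv
  rw [mem_supp] at hv ⊢
  intro hxv
  apply hv
  simp [defH, hxv]

lemma defH_pos_of {σ : Finset V} {x : V → ℝ} {t : ℝ} (h0 : ∀ v, 0 ≤ x v)
    (hs : 0 < ∑ w ∈ σᶜ, x w) (ht0 : 0 ≤ t) (ht1 : t ≤ 1)
    {v : V} (hv : v ∉ σ) (hxv : x v ≠ 0) : 0 < defH σ x t v := by
  have hxv' : 0 < x v := lt_of_le_of_ne (h0 v) (Ne.symm hxv)
  unfold defH
  rw [if_neg hv]
  rcases lt_or_eq_of_le ht1 with h | h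
  · have : 0 < (1 - t) * x v := by
      apply mul_pos (by linarith) hxv'
    have : 0 ≤ t * (x v / ∑ w ∈ σᶜ, x w) :=
      mul_nonneg ht0 (div_nonneg (h0 v) hs.le)
    linarith
  · subst h
    have : 0 < x v / ∑ w ∈ σᶜ, x w := div_pos hxv' hs
    simp only [sub_self, zero_mul, one_mul, zero_add]
    linarith

lemma defH_not_subset {σ : Finset V} {x : V → ℝ} {t : ℝ} (h0 : ∀ v, 0 ≤ x v)
    (hs : 0 < ∑ w ∈ σᶜ, x w) (ht0 : 0 ≤ t) (ht1 : t ≤ 1)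
    (h : ¬ supp x ⊆ σ) : ¬ supp (defH σ x t) ⊆ σ := by
  obtain ⟨v, hv, hvσ⟩ := Finset.not_subset.mp h
  apply Finset.not_subset.mpr
  refine ⟨v, ?_, hvσ⟩
  rw [mem_supp]
  exact (defH_pos_of h0 hs ht0 ht1 hvσ ((mem_supp x v).mp hv)).ne'

lemma defH_one_support {σ : Finset V} {x : V → ℝ} :
    supp (defH σ x 1) ⊆ σᶜ := by
  intro v hv
  rw [mem_supp] at hv
  rw [Finset.mem_compl]
  intro hvσ
  apply hv
  simp [defH, hvσ]

lemma defH_one_fixed {σ : Finset V} {x : V → ℝ} (hsum : ∑ v, x v = 1)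
    (h : supp x ⊆ σᶜ) : defH σ x 1 = x := by
  have hzero : ∀ v ∈ σ, x v = 0 := by
    intro v hvσ
    by_contra hxv
    have hc := h ((mem_supp x v).mpr hxv)
    rw [Finset.mem_compl] at hc
    exact hc hvσ
  have hs1 : ∑ w ∈ σᶜ, x w = 1 := by
    rw [← hsum]
    exact Finset.sum_subset (Finset.subset_univ _) (fun v _ hv =>
      hzero v (by rwa [Finset.mem_compl, not_not] at hv))
  funext v
  unfold defH
  rw [hs1]
  by_cases hvσ : v ∈ σ
  · rw [if_pos hvσ, hzero v hvσ]; ring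
  · rw [if_neg hvσ]; ring

end DefRetractAux

/-- Lemma 2.4: for any subset `σ ⊆ V`, `‖Γ_{≤σ̂}‖` is a deformation retract of
`‖Γ‖ ∖ ‖Γ_{≤σ}‖`. -/
theorem deformation_retract_realization {V : Type} [Fintype V] [DecidableEq V]
    (Γ : ASC V) (σ : Finset V) :
    IsDeformationRetract (ASC.realization (Γ.restrict σᶜ))
      (ASC.realization Γ \ ASC.realization (Γ.restrict σ)) := by
  open DefRetractAux in
  constructor
  · -- A ⊆ X
    intro x hx
    rw [mem_realization_iff] at hx
    obtain ⟨h0, hsum, hface⟩ := hx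
    simp only [ASC.restrict, Set.mem_setOf_eq] at hface
    rw [mem_X_iff]
    refine ⟨h0, hsum, hface.1, fun hsub => ?_⟩
    have hne : (supp x).Nonempty := by
      by_contra h
      rw [Finset.not_nonempty_iff_eq_empty] at h
      have hz : ∀ v ∈ (Finset.univ : Finset V), x v = 0 := by
        intro v _
        by_contra hv
        have := (mem_supp x v).mpr hv
        simp [h] at this
      rw [Finset.sum_congr rfl hz, Finset.sum_const_zero] at hsum
      norm_num at hsum
    obtain ⟨v, hv⟩ := hne
    have h1 := hface.2 hv
    rw [Finset.mem_compl] at h1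
    exact h1 (hsub hv)
  · -- the homotopy
    have hX : ∀ p : ↥(Γ.realization \ (Γ.restrict σ).realization) × ↥unitInterval,
        defH σ p.1.1 p.2.1 ∈ Γ.realization \ (Γ.restrict σ).realization := by
      rintro ⟨⟨x, hx⟩, ⟨t, ht0, ht1⟩⟩
      rw [mem_X_iff] at hx ⊢
      obtain ⟨h0, hsum, hface, hnsub⟩ := hx
      have hs := s_pos h0 hnsub
      exact ⟨defH_nonneg h0 hs ht0 ht1, defH_sum hsum hs,
        Γ.down_closed hface (defH_support_subset t),
        defH_not_subset h0 hs ht0 ht1 hnsub⟩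
    have hsne : ∀ p : ↥(Γ.realization \ (Γ.restrict σ).realization) × ↥unitInterval,
        (∑ w ∈ σᶜ, (p.1 : V → ℝ) w) ≠ 0 := by
      intro p
      obtain ⟨h0, _, _, hnsub⟩ := (mem_X_iff Γ σ _).mp p.1.2
      exact (s_pos h0 hnsub).ne'
    have hcont : Continuous (fun p : ↥(Γ.realization \ (Γ.restrict σ).realization) ×
        ↥unitInterval => defH σ p.1.1 p.2.1) := by
      apply continuous_pi
      intro v
      have hxv : ∀ w : V, Continuous (fun p : ↥(Γ.realization \ (Γ.restrict σ).realization) ×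
          ↥unitInterval => (p.1 : V → ℝ) w) := fun w =>
        (continuous_apply w).comp (continuous_subtype_val.comp continuous_fst)
      have ht : Continuous (fun p : ↥(Γ.realization \ (Γ.restrict σ).realization) ×
          ↥unitInterval => (p.2 : ℝ)) := continuous_subtype_val.comp continuous_snd
      have hsden : Continuous (fun p : ↥(Γ.realization \ (Γ.restrict σ).realization) ×
          ↥unitInterval => ∑ w ∈ σᶜ, (p.1 : V → ℝ) w) :=
        continuous_finset_sum _ (fun w _ => hxv w)
      unfold defH
      by_cases hv : v ∈ σ
      · simp only [if_pos hv, mul_zero, add_zero]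
        exact (continuous_const.sub ht).mul (hxv v)
      · simp only [if_neg hv]
        exact ((continuous_const.sub ht).mul (hxv v)).add
          (ht.mul ((hxv v).div hsden hsne))
    refine ⟨⟨fun p => ⟨defH σ p.1.1 p.2.1, hX p⟩, hcont.subtype_mk _⟩, ?_, ?_, ?_⟩
    · intro x
      apply Subtype.ext
      show defH σ (x : V → ℝ) ((0 : unitInterval) : ℝ) = (x : V → ℝ)
      rw [show ((0 : unitInterval) : ℝ) = 0 from rfl]
      exact defH_zero σ _
    · intro x
      show defH σ (x : V → ℝ) ((1 : unitInterval) : ℝ) ∈ (Γ.restrict σᶜ).realization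
      rw [show ((1 : unitInterval) : ℝ) = 1 from rfl]
      obtain ⟨h0, hsum, hface, hnsub⟩ := (mem_X_iff Γ σ _).mp x.2
      have hs := s_pos h0 hnsub
      rw [mem_realization_iff]
      refine ⟨defH_nonneg h0 hs zero_le_one le_rfl, defH_sum hsum hs, ?_⟩
      exact ⟨Γ.down_closed hface (defH_support_subset 1), defH_one_support⟩
    · intro x hxA
      apply Subtype.ext
      show defH σ (x : V → ℝ) ((1 : unitInterval) : ℝ) = (x : V → ℝ)
      rw [show ((1 : unitInterval) : ℝ) = 1 from rfl]
      rw [mem_realization_iff] at hxA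
      obtain ⟨h0, hsum, hface⟩ := hxA
      simp only [ASC.restrict, Set.mem_setOf_eq] at hface
      exact defH_one_fixed hsum hface.2
end

section
/- Let Γ be an abstract simplicial complex on a finite vertex set V, let σ ∈ Γ be a face, and let τ_1, …, τ_m be the maximal faces of Γ containing σ. If τ_1 ∩ ⋯ ∩ τ_m properly contains σ, then the geometric realization ‖link_Γ σ‖ is contractible. -/
open Finset

/-- Every face containing a given face extends to a maximal face. -/
theorem exists_maximal_face_ext {V : Type} [Fintype V] [DecidableEq V]
    (Γ : ASC V) (ρ : Finset V) (hρ : ρ ∈ Γ.faces) :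
    ∃ t, Γ.IsMaximalFace t ∧ ρ ⊆ t := by
  classical
  set S : Finset (Finset V) :=
    Finset.univ.filter (fun t => t ∈ Γ.faces ∧ ρ ⊆ t) with hS
  have hne : S.Nonempty := ⟨ρ, by simp [hS, hρ]⟩
  obtain ⟨t, htS, hmax⟩ := S.exists_max_image Finset.card hne
  simp only [hS, Finset.mem_filter, Finset.mem_univ, true_and] at htS
  refine ⟨t, ⟨htS.1, ?_⟩, htS.2⟩
  intro t' ht' hsub
  have ht'S : t' ∈ S := by
    simp [hS, ht', htS.2.trans hsub]
  exact (Finset.eq_of_subset_of_card_le hsub (hmax t' ht'S)).symm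

/-- Lemma 2.5: let `σ ∈ Γ` and let `τ 1, …, τ m` be (an enumeration of) the maximal faces of `Γ`
containing `σ`.  If `τ 1 ∩ ⋯ ∩ τ m` properly contains `σ`, then `‖link_Γ σ‖` is contractible. -/
theorem link_contractible {V : Type} [Fintype V] [DecidableEq V]
    (Γ : ASC V) (σ : Finset V) (hσ : σ ∈ Γ.faces)
    (m : ℕ) (τ : Fin m → Finset V)
    (hτ : ∀ t, (∃ k, τ k = t) ↔ (Γ.IsMaximalFace t ∧ σ ⊆ t))
    (hlt : σ ⊂ Finset.univ.inf τ) :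
    ContractibleSpace ↥(ASC.realization (Γ.link σ)) := by
  classical
  obtain ⟨v, hv, hvσ⟩ := Finset.exists_of_ssubset hlt
  have hvτ : ∀ k, v ∈ τ k := fun k =>
    (Finset.inf_le (Finset.mem_univ k) : Finset.univ.inf τ ≤ τ k) hv
  -- cone property
  have cone : ∀ ρ ∈ (Γ.link σ).faces, insert v ρ ∈ (Γ.link σ).faces := by
    intro ρ hρ
    obtain ⟨h1, h2⟩ := hρ
    obtain ⟨t, htmax, hsub⟩ := exists_maximal_face_ext Γ (ρ ∪ σ) h1
    obtain ⟨k, hk⟩ := (hτ t).mpr ⟨htmax, (Finset.subset_union_right).trans hsub⟩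
    have hvt : v ∈ t := hk ▸ hvτ k
    constructor
    · apply Γ.down_closed htmax.1
      intro w hw
      rcases Finset.mem_union.mp hw with hw | hw
      · rcases Finset.mem_insert.mp hw with rfl | hw
        · exact hvt
        · exact hsub (Finset.mem_union_left _ hw)
      · exact hsub (Finset.mem_union_right _ hw)
    · rw [Finset.insert_inter_of_notMem hvσ, h2]
  have hempty : (∅ : Finset V) ∈ (Γ.link σ).faces := by
    constructor
    · simpa using hσ
    · simp
  have hvlink : ({v} : Finset V) ∈ (Γ.link σ).faces := by
    simpa using cone ∅ hempty
  -- apex point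
  set x0 : V → ℝ := fun w => if w = v then 1 else 0 with hx0
  have hx0mem : x0 ∈ ASC.realization (Γ.link σ) := by
    refine ⟨fun w => by by_cases h : w = v <;> simp [hx0, h], by simp [hx0], {v}, hvlink, ?_⟩
    intro w
    by_cases h : w = v <;> simp [hx0, h]
  have hstar : StarConvex ℝ x0 (ASC.realization (Γ.link σ)) := by
    intro y hy a b ha hb hab
    rcases eq_or_lt_of_le ha with ha0 | ha'
    · simpa [← ha0, (by linarith : b = 1)] using hy
    obtain ⟨hy0, hy1, ρ, hρ, hysupp⟩ := hy
    rcases eq_or_lt_of_le hb with hb0 | hb'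
    · have haa : a = 1 := by linarith
      have : a • x0 + b • y = x0 := by
        funext w; simp [← hb0, haa]
      rw [this]; exact hx0mem
    have hnonneg : ∀ w, 0 ≤ a * x0 w + b * y w := fun w =>
      add_nonneg (mul_nonneg ha'.le (by by_cases h : w = v <;> simp [hx0, h]))
        (mul_nonneg hb (hy0 w))
    refine ⟨hnonneg, ?_, ?_⟩
    · simp only [Pi.add_apply, Pi.smul_apply, smul_eq_mul]
      rw [Finset.sum_add_distrib, ← Finset.mul_sum, ← Finset.mul_sum, hy1]
      simp [hx0, hab]
    · refine ⟨insert v ρ, cone ρ hρ, ?_⟩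
      intro w
      simp only [Pi.add_apply, Pi.smul_apply, smul_eq_mul]
      constructor
      · intro hne
        by_cases h : w = v
        · exact h ▸ Finset.mem_insert_self v ρ
        · apply Finset.mem_insert_of_mem
          apply (hysupp w).mp
          intro h0
          exact hne (by simp [hx0, h, h0])
      · intro hw hzero
        have t1 : 0 ≤ a * x0 w :=
          mul_nonneg ha'.le (by by_cases h : w = v <;> simp [hx0, h])
        have t2 : 0 ≤ b * y w := mul_nonneg hb'.le (hy0 w)
        have h1 : a * x0 w = 0 ∧ b * y w = 0 := ⟨by linarith, by linarith⟩
        rcases Finset.mem_insert.mp hw with rfl | hw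
        · have : x0 w = 0 := by
            rcases mul_eq_zero.mp h1.1 with h | h
            · linarith
            · exact h
          simp [hx0] at this
        · have hyw : y w ≠ 0 := (hysupp w).mpr hw
          rcases mul_eq_zero.mp h1.2 with h | h
          · linarith
          · exact hyw h
  exact hstar.contractibleSpace ⟨x0, hx0mem⟩
end
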